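/- Let r ≥ 1 be an integer and let ρ be a real number with ρ > 1/(r+1). Define f : ℝ → ℝ by f(s) = (s/r)²·(s+1)/(r+1) + (1 − (s/r)²)·ρ. Then f attains its minimum over [0, ∞) at the unique point s* = (2/3)·((r+1)·ρ − 1); that is, f(s*) ≤ f(s) for all s ≥ 0, with equality only for s = s*. -/

import Mathlib

/-- In the cooperative two-sided secretary game, the one-round objective
`f(s) = (s/r)²(s+1)/(r+1) + (1 − (s/r)²)ρ`, with `ρ > 1/(r+1)`, attains its minimum
over `[0, ∞)` at the unique point `s* = (2/3)((r+1)ρ − 1)`. -/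
theorem cooperative_threshold_minimizer (r : ℕ) (hr : 1 ≤ r) (ρ : ℝ)
    (hρ : ρ > 1 / ((r : ℝ) + 1)) :
    ∀ s : ℝ, 0 ≤ s →
      ((2 / 3 * (((r : ℝ) + 1) * ρ - 1)) / (r : ℝ)) ^ 2 *
            (2 / 3 * (((r : ℝ) + 1) * ρ - 1) + 1) / ((r : ℝ) + 1) +
          (1 - ((2 / 3 * (((r : ℝ) + 1) * ρ - 1)) / (r : ℝ)) ^ 2) * ρ ≤
        (s / (r : ℝ)) ^ 2 * (s + 1) / ((r : ℝ) + 1) + (1 - (s / (r : ℝ)) ^ 2) * ρ ∧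
      (((2 / 3 * (((r : ℝ) + 1) * ρ - 1)) / (r : ℝ)) ^ 2 *
            (2 / 3 * (((r : ℝ) + 1) * ρ - 1) + 1) / ((r : ℝ) + 1) +
          (1 - ((2 / 3 * (((r : ℝ) + 1) * ρ - 1)) / (r : ℝ)) ^ 2) * ρ =
        (s / (r : ℝ)) ^ 2 * (s + 1) / ((r : ℝ) + 1) + (1 - (s / (r : ℝ)) ^ 2) * ρ →
        s = 2 / 3 * (((r : ℝ) + 1) * ρ - 1)) := by
  intro s hs
  have hr0 : (0:ℝ) < (r : ℝ) := by exact_mod_cast hr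
  have hr0' : (r : ℝ) ≠ 0 := ne_of_gt hr0
  have hr1 : (0:ℝ) < (r : ℝ) + 1 := by linarith
  have hr1' : (r : ℝ) + 1 ≠ 0 := ne_of_gt hr1
  set a : ℝ := ((r : ℝ) + 1) * ρ - 1 with ha_def
  have ha : 0 < a := by
    have := (div_lt_iff₀ hr1).mp hρ
    simp only [ha_def]; nlinarith
  have key :
      (s / (r : ℝ)) ^ 2 * (s + 1) / ((r : ℝ) + 1) + (1 - (s / (r : ℝ)) ^ 2) * ρ -
        (((2 / 3 * a) / (r : ℝ)) ^ 2 * (2 / 3 * a + 1) / ((r : ℝ) + 1) +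
          (1 - ((2 / 3 * a) / (r : ℝ)) ^ 2) * ρ) =
      (s - 2 / 3 * a) ^ 2 * (s + a / 3) / ((r : ℝ) ^ 2 * ((r : ℝ) + 1)) := by
    field_simp
    ring
  have hpos : 0 ≤ (s - 2 / 3 * a) ^ 2 * (s + a / 3) / ((r : ℝ) ^ 2 * ((r : ℝ) + 1)) := by
    apply div_nonneg
    · apply mul_nonneg (sq_nonneg _); linarith
    · positivity
  constructor
  · linarith [key, hpos]
  · intro heq
    have h0 : (s - 2 / 3 * a) ^ 2 * (s + a / 3) / ((r : ℝ) ^ 2 * ((r : ℝ) + 1)) = 0 := by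
      linarith [key]
    have hd : (0:ℝ) < (r : ℝ) ^ 2 * ((r : ℝ) + 1) := by positivity
    field_simp at h0
    rw [mul_zero] at h0
    rcases mul_eq_zero.mp h0 with h | h
    · have := pow_eq_zero_iff (n := 2) (by norm_num) |>.mp h
      linarith
    · linarith
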